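/- Let α be irrational with bounded partial quotients, with C₂ the constant from the three-distance estimate (every gap of the partition of 𝕋 by 0, −α, …, −(k−1)α has length ≥ C₂/k). Suppose x₁, …, x_l ∈ 𝕋 satisfy x_i − x_j = r_{ij}/q for some fixed q ∈ ℕ and integers r_{ij} with |r_{ij}| ≤ q. Then for every m ∈ ℕ, any two distinct points of the form x_s + jα, s = 1,…,l, j = 0,…,m−1, have distance on 𝕋 at least C₂/(q²·m). -/

import Mathlib

/-- Distance from a real number to the nearest integer (metric on `ℝ/ℤ`). -/
noncomputable def distToInt (x : ℝ) : ℝ := |x - round x|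

lemma distToInt_add_int (x : ℝ) (n : ℤ) : distToInt (x + n) = distToInt x := by
  unfold distToInt
  rw [round_add_intCast]
  push_cast
  ring_nf

lemma distToInt_int_mul_le (n : ℤ) (x : ℝ) :
    distToInt ((n : ℝ) * x) ≤ |n| * distToInt x := by
  have h := round_le ((n : ℝ) * x) (n * round x)
  unfold distToInt
  calc |(n : ℝ) * x - round ((n : ℝ) * x)| ≤ |(n : ℝ) * x - ((n * round x : ℤ) : ℝ)| := h
    _ = |(n : ℤ)| * |x - round x| := by
        push_cast
        rw [← abs_mul]
        ring_nf

/-- If `x₁, …, x_l` are points of the circle whose pairwise differences are rationals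
`r_{ij}/q` with `|r_{ij}| ≤ q`, then any two distinct points of the form `x_s + jα`,
`j = 0, …, m-1`, are at distance at least `C₂/(q² m)` on the circle. -/
theorem stmt4 (α : ℝ) (hα : Irrational α) (C₂ : ℝ) (hC₂ : 0 < C₂)
    (hgap : ∀ k : ℕ, 1 ≤ k → ∀ j : ℤ, j ≠ 0 → |j| ≤ (k : ℤ) - 1 →
      C₂ / (k : ℝ) ≤ distToInt ((j : ℝ) * α))
    (l q m : ℕ) (hq : 0 < q) (hm : 0 < m) (x : Fin l → ℝ)
    (hx : ∀ i j : Fin l, ∃ r : ℤ, |r| ≤ (q : ℤ) ∧ x i - x j = (r : ℝ) / (q : ℝ)) :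
    ∀ (s s' : Fin l) (j j' : ℕ), j < m → j' < m →
      distToInt ((x s + (j : ℝ) * α) - (x s' + (j' : ℝ) * α)) ≠ 0 →
      C₂ / ((q : ℝ) ^ 2 * (m : ℝ)) ≤
        distToInt ((x s + (j : ℝ) * α) - (x s' + (j' : ℝ) * α)) := by
  have hqR : (0 : ℝ) < q := by exact_mod_cast hq
  have hmR : (0 : ℝ) < m := by exact_mod_cast hm
  have hC₂1 : C₂ ≤ 1 := by
    have h2 := hgap 2 (by norm_num) 1 one_ne_zero (by norm_num)
    have h3 : distToInt (((1 : ℤ) : ℝ) * α) ≤ 1 / 2 := by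
      simpa [distToInt] using abs_sub_round (((1 : ℤ) : ℝ) * α)
    push_cast at h2
    linarith
  intro s s' j j' hj hj' hne
  set d : ℝ := (x s + (j : ℝ) * α) - (x s' + (j' : ℝ) * α) with hd
  obtain ⟨r, hr, hxx⟩ := hx s s'
  set n : ℤ := q * ((j : ℤ) - (j' : ℤ)) with hn
  have hqd : (q : ℝ) * d = (r : ℝ) + (n : ℝ) * α := by
    rw [hd, hn]
    push_cast
    rw [show x s + (j:ℝ) * α - (x s' + (j':ℝ) * α)
        = (x s - x s') + ((j:ℝ) - (j':ℝ)) * α by ring, hxx]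
    field_simp
  by_cases hn0 : n = 0
  · -- then j = j', d = r/q
    have hjj : (j : ℝ) = (j' : ℝ) := by
      have : (j : ℤ) = (j' : ℤ) := by
        rcases mul_eq_zero.mp hn0 with h | h
        · exact absurd h (by exact_mod_cast hq.ne')
        · linarith [sub_eq_zero.mp h]
      exact_mod_cast this
    have hdr : d = (r : ℝ) / q := by
      rw [hd, hjj, show x s + (j':ℝ) * α - (x s' + (j':ℝ) * α) = x s - x s' by ring, hxx]
    have hnum : (r : ℤ) - q * round d ≠ 0 := by
      intro h
      apply hne
      have hrq : (r : ℤ) = q * round d := by linarith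
      have : d = ((round d : ℤ) : ℝ) := by
        rw [hdr]
        rw [show (r : ℝ) = (q : ℝ) * round d by exact_mod_cast congrArg (Int.cast : ℤ → ℝ) hrq]
        field_simp
        rw [round_intCast]
      rw [show distToInt d = distToInt ((round d : ℤ) : ℝ) from congrArg _ this]
      simp [distToInt, round_intCast]
    have h1q : 1 / (q : ℝ) ≤ distToInt d := by
      unfold distToInt
      have heq : d - round d = (((r : ℤ) - q * round d : ℤ) : ℝ) / q := by
        rw [hdr]
        push_cast
        field_simp
      rw [heq, abs_div, abs_of_pos hqR]
      have h1 : (1 : ℝ) ≤ |(((r : ℤ) - q * round d : ℤ) : ℝ)| := by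
        exact_mod_cast Int.one_le_abs hnum
      gcongr
    calc C₂ / ((q : ℝ) ^ 2 * m) ≤ 1 / q := by
          rw [div_le_div_iff₀ (by positivity) hqR]
          have h1 : (1 : ℝ) ≤ q := by exact_mod_cast hq
          have h2 : (1 : ℝ) ≤ m := by exact_mod_cast hm
          nlinarith
      _ ≤ distToInt d := h1q
  · -- n ≠ 0 case
    have hk : 1 ≤ q * m := Nat.one_le_iff_ne_zero.mpr (Nat.mul_ne_zero hq.ne' hm.ne')
    have hnb : |n| ≤ ((q * m : ℕ) : ℤ) - 1 := by
      have hjm : |(j : ℤ) - (j' : ℤ)| ≤ (m : ℤ) - 1 := by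
        rw [abs_sub_le_iff]
        omega
      have : |n| = (q : ℤ) * |(j : ℤ) - (j' : ℤ)| := by
        rw [hn, abs_mul, abs_of_nonneg (by positivity)]
      rw [this]
      push_cast
      nlinarith [hjm, (by exact_mod_cast hq : (1:ℤ) ≤ q)]
    have hgap' := hgap (q * m) hk n hn0 hnb
    have h1 : distToInt ((n : ℝ) * α) = distToInt ((q : ℝ) * d) := by
      rw [hqd, add_comm]
      exact (distToInt_add_int ((n : ℝ) * α) r).symm
    have h2 : distToInt ((q : ℝ) * d) ≤ q * distToInt d := by
      have := distToInt_int_mul_le (q : ℤ) d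
      simpa [abs_of_nonneg (by positivity : (0:ℤ) ≤ (q:ℤ))] using this
    have h3 : C₂ / ((q * m : ℕ) : ℝ) ≤ q * distToInt d := by
      calc C₂ / ((q * m : ℕ) : ℝ) ≤ distToInt ((n : ℝ) * α) := hgap'
        _ = distToInt ((q : ℝ) * d) := h1
        _ ≤ q * distToInt d := h2
    rw [← hd] at *
    rw [div_le_iff₀ (by positivity)] at h3 ⊢
    push_cast at h3
    nlinarith [h3]
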